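/- Let α ∈ ℂ with |α| = 1, let r̂ be the largest real root of r³ − 6r + 2α + 2conj(α) = 0, and let D₃(r̂) be the 3×3 matrix [[r̂, conj(α), 2·conj(α)²], [α, r̂, 1], [2α², 1, r̂]]. Then the vector (−2·conj(α)² + r̂⁻¹·conj(α), 2·conj(α)·r̂⁻¹ − 1, r̂ − r̂⁻¹)ᵀ ∈ ℂ³ is nonzero and lies in the kernel of D₃(r̂), and it spans the kernel of D₃(r̂). -/

import Mathlib

/-- The matrix `D₃(r)` of the 3⊗3 construction. -/
noncomputable def D3 (α : ℂ) (r : ℝ) : Matrix (Fin 3) (Fin 3) ℂ :=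
  !![(r : ℂ), (starRingEnd ℂ) α, 2 * ((starRingEnd ℂ) α) ^ 2;
     α, (r : ℂ), 1;
     2 * α ^ 2, 1, (r : ℂ)]

theorem stmt10 (α : ℂ) (hα : ‖α‖ = 1) (rh : ℝ)
    (hroot : (rh : ℂ) ^ 3 - 6 * (rh : ℂ) + 2 * α + 2 * (starRingEnd ℂ) α = 0)
    (hmax : ∀ s : ℝ, (s : ℂ) ^ 3 - 6 * (s : ℂ) + 2 * α + 2 * (starRingEnd ℂ) α = 0 → s ≤ rh) :
    (![-2 * ((starRingEnd ℂ) α) ^ 2 + (rh : ℂ)⁻¹ * (starRingEnd ℂ) α,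
       2 * (starRingEnd ℂ) α * (rh : ℂ)⁻¹ - 1,
       (rh : ℂ) - (rh : ℂ)⁻¹] : Fin 3 → ℂ) ≠ 0 ∧
    (D3 α rh).mulVec
      ![-2 * ((starRingEnd ℂ) α) ^ 2 + (rh : ℂ)⁻¹ * (starRingEnd ℂ) α,
        2 * (starRingEnd ℂ) α * (rh : ℂ)⁻¹ - 1,
        (rh : ℂ) - (rh : ℂ)⁻¹] = 0 ∧
    ∀ x : Fin 3 → ℂ, (D3 α rh).mulVec x = 0 →
      ∃ c : ℂ, x = c • ![-2 * ((starRingEnd ℂ) α) ^ 2 + (rh : ℂ)⁻¹ * (starRingEnd ℂ) α,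
                         2 * (starRingEnd ℂ) α * (rh : ℂ)⁻¹ - 1,
                         (rh : ℂ) - (rh : ℂ)⁻¹] := by
  have hb : α * (starRingEnd ℂ) α = 1 := by
    rw [Complex.mul_conj, Complex.normSq_eq_norm_sq, hα]; norm_num
  have hreabs : |α.re| ≤ 1 := by
    simpa [hα] using Complex.abs_re_le_norm α
  have hre1 : α.re ≤ 1 := (abs_le.mp hreabs).2
  have hre2 : -1 ≤ α.re := (abs_le.mp hreabs).1
  -- rh ≥ 2 via IVT on [2,3]
  have hrh2 : 2 ≤ rh := by
    set f : ℝ → ℝ := fun s => s ^ 3 - 6 * s + 4 * α.re with hf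
    have hc : ContinuousOn f (Set.Icc 2 3) := by
      apply Continuous.continuousOn; fun_prop
    have hiv := intermediate_value_Icc (by norm_num : (2:ℝ) ≤ 3) hc
    have h0 : (0:ℝ) ∈ Set.Icc (f 2) (f 3) := by
      constructor
      · simp only [hf]; nlinarith
      · simp only [hf]; nlinarith
    obtain ⟨s, hs, hfs⟩ := hiv h0
    have hcs : (s : ℂ) ^ 3 - 6 * (s : ℂ) + 2 * α + 2 * (starRingEnd ℂ) α = 0 := by
      have hconj : α + (starRingEnd ℂ) α = 2 * (α.re : ℂ) := by
        rw [Complex.add_conj]; push_cast; ring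
      have hfs' : s ^ 3 - 6 * s + 4 * α.re = 0 := hfs
      have : ((s ^ 3 - 6 * s + 4 * α.re : ℝ) : ℂ) = 0 := by exact_mod_cast congrArg Complex.ofReal hfs'
      push_cast at this
      linear_combination this + 2 * hconj
    have := hmax s hcs
    linarith [hs.1]
  have hrh0 : (rh : ℂ) ≠ 0 := by
    exact_mod_cast Complex.ofReal_ne_zero.mpr (by linarith)
  have hu : (rh : ℂ) * (rh : ℂ)⁻¹ = 1 := mul_inv_cancel₀ hrh0
  have hv2 : (rh : ℂ) - (rh : ℂ)⁻¹ ≠ 0 := by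
    intro h
    have h2 : ((rh ^ 2 - 1 : ℝ) : ℂ) = 0 := by
      push_cast
      linear_combination (rh : ℂ) * h + hu
    have h3 : rh ^ 2 - 1 = 0 := by exact_mod_cast h2
    nlinarith
  have hd : α - 2 * α ^ 2 * (rh : ℂ) ≠ 0 := by
    intro h
    have h' : α = 2 * α ^ 2 * (rh : ℂ) := by linear_combination h
    have := congrArg (fun z : ℂ => ‖z‖) h'
    simp [map_mul, map_pow, hα, Complex.norm_real] at this
    rw [abs_of_pos (by linarith : (0:ℝ) < rh)] at this
    linarith
  refine ⟨?_, ?_, ?_⟩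
  · intro h
    have h2 := congrFun h 2
    simp at h2
    exact hv2 (by linear_combination h2)
  · funext i
    fin_cases i <;>
      simp [D3, Matrix.mulVec, dotProduct, Fin.sum_univ_three]
    · linear_combination ((starRingEnd ℂ) α) * hu
    · linear_combination ((rh : ℂ)⁻¹ - 2 * (starRingEnd ℂ) α) * hb + 2 * (starRingEnd ℂ) α * hu
    · linear_combination (rh : ℂ)⁻¹ * hroot + (-(rh : ℂ) ^ 2 + 5) * hu +
        (-4 * (α * (starRingEnd ℂ) α + 1) + 2 * α * (rh : ℂ)⁻¹) * hb
  · intro x hx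
    have H1 := congrFun hx 1
    have H2 := congrFun hx 2
    simp [D3, Matrix.mulVec, dotProduct, Fin.sum_univ_three] at H1 H2
    refine ⟨x 2 / ((rh : ℂ) - (rh : ℂ)⁻¹), ?_⟩
    funext i
    set b := (starRingEnd ℂ) α with hbdef
    set u := (rh : ℂ)⁻¹ with hudef
    fin_cases i <;> simp
    · -- x 0 = c * v0
      rw [div_mul_eq_mul_div, eq_div_iff hv2]
      apply mul_left_cancel₀ hd
      linear_combination ((rh : ℂ) - u) * H1 - (rh : ℂ) * ((rh : ℂ) - u) * H2 +
        x 2 * hroot - x 2 * (-2 * b + u + 4 * (rh : ℂ) * (α * b + 1) - 2 * α * (rh : ℂ) * u) * hb -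
        x 2 * ((rh : ℂ) - 2 * α) * hu
    · -- x 1 = c * v1
      rw [div_mul_eq_mul_div, eq_div_iff hv2]
      apply mul_left_cancel₀ hd
      linear_combination ((rh : ℂ) - u) * (α * H2 - 2 * α ^ 2 * H1) -
        x 2 * (α * u) * hroot + x 2 * (4 * α * (rh : ℂ) * u) * hb -
        x 2 * (α - α * (rh : ℂ) ^ 2) * hu
    · -- x 2 = c * v2
      rw [div_mul_eq_mul_div, eq_div_iff hv2]
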